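/- Let V be a real vector space equipped with a norm ‖·‖ and with a metric d, and assume that every d-Cauchy sequence (σ_p)_{p≥1} in V with sup_p ‖σ_p‖ < ∞ converges in the metric d to an element of V. Let (G_p)_{p≥1} be a sequence of d-open subsets of V such that for every p ≥ 1, every σ ∈ V and all ε > 0, δ > 0 there exists σ' ∈ G_p with d(σ, σ') < ε and ‖σ − σ'‖ < δ. Then the intersection ⋂_{p≥1} G_p is dense in V with respect to the metric d. -/
import Mathlib


open Filter

/-- The Baire-category-type argument from the proof of Theorem (6.5): in a real vector
space `V` carrying a metric `d` and a norm `N`, in which every `d`-Cauchy sequence that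
is bounded in `N` converges, the intersection of a sequence of `d`-open sets, each of
which can be approached simultaneously in `d` and in `N`, is `d`-dense. -/
theorem stmt_9 {V : Type*} [AddCommGroup V] [Module ℝ V] [MetricSpace V]
    (N : V → ℝ)
    (hN0 : ∀ v : V, 0 ≤ N v)
    (hNadd : ∀ v w : V, N (v + w) ≤ N v + N w)
    (hNsmul : ∀ (a : ℝ) (v : V), N (a • v) = |a| * N v)
    (hcomplete : ∀ σ : ℕ → V, CauchySeq σ → (∃ C : ℝ, ∀ p, N (σ p) ≤ C) →
      ∃ x : V, Tendsto σ atTop (nhds x))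
    (G : ℕ → Set V) (hopen : ∀ p, IsOpen (G p))
    (hdense : ∀ (p : ℕ) (σ : V) (ε δ : ℝ), 0 < ε → 0 < δ →
      ∃ σ' ∈ G p, dist σ σ' < ε ∧ N (σ - σ') < δ) :
    Dense (⋂ p, G p) := by
  have hNneg : ∀ v : V, N (-v) = N v := by
    intro v
    rw [← neg_one_smul ℝ v, hNsmul]
    simp
  rw [Metric.dense_iff]
  intro x ε hε
  have key : ∀ (p : ℕ) (σ0 : V) (r : ℝ), ∃ σ' : V, ∃ r' : ℝ, 0 < r →
      σ' ∈ G p ∧ dist σ0 σ' < r / 2 ∧ N (σ0 - σ') < (1/2 : ℝ) ^ p ∧ 0 < r' ∧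
        r' ≤ r / 2 ∧ Metric.closedBall σ' r' ⊆ G p := by
    intro p σ0 r
    by_cases hr : 0 < r
    · obtain ⟨σ', hG, hd, hn⟩ := hdense p σ0 (r / 2) ((1/2 : ℝ) ^ p) (by linarith) (by positivity)
      obtain ⟨s, hs, hball⟩ := Metric.isOpen_iff.mp (hopen p) σ' hG
      refine ⟨σ', min (r / 2) (s / 2), fun _ => ⟨hG, hd, hn, ?_, min_le_left _ _, ?_⟩⟩
      · exact lt_min (by linarith) (by linarith)
      · intro y hy
        apply hball
        have h1 : dist y σ' ≤ min (r / 2) (s / 2) := hy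
        exact lt_of_le_of_lt (h1.trans (min_le_right _ _)) (by linarith)
    · exact ⟨σ0, 0, fun h => absurd h hr⟩
  choose f g hfg using key
  let seq : ℕ → V × ℝ := fun p =>
    Nat.rec (x, ε / 2) (fun p ih => (f p ih.1 ih.2, g p ih.1 ih.2)) p
  let σs : ℕ → V := fun p => (seq p).1
  let rs : ℕ → ℝ := fun p => (seq p).2
  have hσ0 : σs 0 = x := rfl
  have hr0 : rs 0 = ε / 2 := rfl
  have hpos : ∀ p, 0 < rs p := by
    intro p
    induction p with
    | zero => rw [hr0]; linarith
    | succ p ih => exact (hfg p (σs p) (rs p) ih).2.2.2.1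
  have H : ∀ p, σs (p+1) ∈ G p ∧ dist (σs p) (σs (p+1)) < rs p / 2 ∧
      N (σs p - σs (p+1)) < (1/2 : ℝ) ^ p ∧ 0 < rs (p+1) ∧
      rs (p+1) ≤ rs p / 2 ∧ Metric.closedBall (σs (p+1)) (rs (p+1)) ⊆ G p :=
    fun p => hfg p (σs p) (rs p) (hpos p)
  have hnest : ∀ p, Metric.closedBall (σs (p+1)) (rs (p+1)) ⊆
      Metric.closedBall (σs p) (rs p) := by
    intro p y hy
    have h1 : dist y (σs (p+1)) ≤ rs (p+1) := hy
    have h2 := (H p).2.1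
    have h3 := (H p).2.2.2.2.1
    have : dist y (σs p) ≤ dist y (σs (p+1)) + dist (σs (p+1)) (σs p) := dist_triangle _ _ _
    rw [dist_comm (σs (p+1)) (σs p)] at this
    have : dist y (σs p) ≤ rs p := by linarith
    exact this
  have hchain : ∀ p q, p ≤ q → Metric.closedBall (σs q) (rs q) ⊆
      Metric.closedBall (σs p) (rs p) := by
    intro p q hpq
    induction q, hpq using Nat.le_induction with
    | base => exact subset_rfl
    | succ q hq ih => exact (hnest q).trans ih
  have hrb : ∀ p, rs p ≤ ε / 2 * (1/2 : ℝ) ^ p := by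
    intro p
    induction p with
    | zero => rw [hr0]; simp
    | succ p ih =>
      have h := (H p).2.2.2.2.1
      have : (1/2 : ℝ) ^ (p+1) = (1/2 : ℝ) ^ p / 2 := by ring
      rw [this]
      linarith
  have hcauchy : CauchySeq σs := by
    apply cauchySeq_of_le_tendsto_0 (fun p => ε * (1/2 : ℝ) ^ p)
    · intro n m K hn hm
      have h1 : σs n ∈ Metric.closedBall (σs K) (rs K) :=
        hchain K n hn (Metric.mem_closedBall_self (hpos n).le)
      have h2 : σs m ∈ Metric.closedBall (σs K) (rs K) :=
        hchain K m hm (Metric.mem_closedBall_self (hpos m).le)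
      have h1' : dist (σs n) (σs K) ≤ rs K := h1
      have h2' : dist (σs m) (σs K) ≤ rs K := h2
      have h3 : dist (σs n) (σs m) ≤ dist (σs n) (σs K) + dist (σs K) (σs m) :=
        dist_triangle _ _ _
      rw [dist_comm (σs K) (σs m)] at h3
      have := hrb K
      linarith
    · have h := tendsto_pow_atTop_nhds_zero_of_lt_one (by norm_num : (0:ℝ) ≤ 1/2)
        (by norm_num : (1/2 : ℝ) < 1)
      have := h.const_mul ε
      simpa using this
  have hNb : ∀ p, N (σs p) ≤ N x + 2 - 2 * (1/2 : ℝ) ^ p := by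
    intro p
    induction p with
    | zero => rw [hσ0]; norm_num
    | succ p ih =>
      have e : σs (p+1) = σs p + (σs (p+1) - σs p) := by abel
      have h1 : N (σs (p+1)) ≤ N (σs p) + N (σs (p+1) - σs p) := by
        calc N (σs (p+1)) = N (σs p + (σs (p+1) - σs p)) := by rw [← e]
        _ ≤ N (σs p) + N (σs (p+1) - σs p) := hNadd _ _
      have h2 : N (σs (p+1) - σs p) = N (σs p - σs (p+1)) := by
        rw [← hNneg (σs p - σs (p+1))]; congr 1; abel
      have h3 := (H p).2.2.1
      have h4 : (1/2 : ℝ) ^ (p+1) = (1/2 : ℝ) ^ p / 2 := by ring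
      rw [h2] at h1
      rw [h4]
      linarith
  obtain ⟨y, hy⟩ := hcomplete σs hcauchy ⟨N x + 2, fun p => by
    have := hNb p
    have : (0:ℝ) < (1/2 : ℝ) ^ p := by positivity
    nlinarith [hNb p]⟩
  have hyG : ∀ p, y ∈ G p := by
    intro p
    apply (H p).2.2.2.2.2
    apply Metric.isClosed_closedBall.mem_of_tendsto hy
    filter_upwards [eventually_ge_atTop (p+1)] with q hq
    exact hchain (p+1) q hq (Metric.mem_closedBall_self (hpos q).le)
  have hyx : y ∈ Metric.closedBall x (ε / 2) := by
    rw [← hσ0, ← hr0]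
    apply Metric.isClosed_closedBall.mem_of_tendsto hy
    filter_upwards [eventually_ge_atTop 0] with q hq
    exact hchain 0 q hq (Metric.mem_closedBall_self (hpos q).le)
  refine ⟨y, ?_, Set.mem_iInter.2 hyG⟩
  have : dist y x ≤ ε / 2 := hyx
  exact Metric.mem_ball.2 (by linarith)
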